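/- Quotient readout for lopsided division: let a b : ℕ be positive with b odd, b ≤ a, and let Γ = 1 + Nat.size a - Nat.size b. Let c, r : ℕ → ℤ be the lopsided-division sequences for (a : ℤ) and (b : ℤ). If b divides a, then the quotient is given by the diagonal bits of the algorithm: (a / b : ℤ) = ∑_{i < Γ} (if (c i).testBit i then 2^i else 0). -/

import Mathlib

instance : XorOp ℤ := ⟨Int.xor⟩
instance : AndOp ℤ := ⟨Int.land⟩

private theorem natHA (m n : ℕ) : m + n = (m ^^^ n) + 2 * (m &&& n) := by
  induction m using Nat.binaryRec generalizing n with
  | zero => simp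
  | bit a m ih =>
    induction n using Nat.binaryRec with
    | zero => simp
    | bit b n _ =>
      rw [Nat.xor_bit, Nat.land_bit]
      have := ih n
      cases a <;> cases b <;> simp [Nat.bit_val] <;> omega

private theorem natOR (m n : ℕ) : m ||| n = (m ^^^ n) + (m &&& n) := by
  induction m using Nat.binaryRec generalizing n with
  | zero => simp
  | bit a m ih =>
    induction n using Nat.binaryRec with
    | zero => simp
    | bit b n _ =>
      rw [Nat.xor_bit, Nat.land_bit, Nat.lor_bit]
      have := ih n
      cases a <;> cases b <;> simp [Nat.bit_val] <;> omega

private theorem natLD (m n : ℕ) : m.ldiff n + (m &&& n) = m := by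
  induction m using Nat.binaryRec generalizing n with
  | zero => simp [Nat.ldiff, Nat.bitwise]
  | bit a m ih =>
    induction n using Nat.binaryRec with
    | zero => simp [Nat.ldiff, Nat.bitwise]
    | bit b n _ =>
      rw [Nat.ldiff_bit, Nat.land_bit]
      have := ih n
      cases a <;> cases b <;> simp [Nat.bit_val] <;> omega

private theorem natXD (m n : ℕ) : m ^^^ n = m.ldiff n + n.ldiff m := by
  induction m using Nat.binaryRec generalizing n with
  | zero => simp [Nat.ldiff, Nat.bitwise]
  | bit a m ih =>
    induction n using Nat.binaryRec with
    | zero => simp [Nat.ldiff, Nat.bitwise]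
    | bit b n _ =>
      rw [Nat.ldiff_bit, Nat.ldiff_bit, Nat.xor_bit]
      have := ih n
      cases a <;> cases b <;> simp [Nat.bit_val] <;> omega

private theorem ixor_def (x y : ℤ) : x ^^^ y = Int.xor x y := rfl
private theorem iand_def (x y : ℤ) : x &&& y = Int.land x y := rfl
private theorem inot_def (x : ℤ) : ~~~x = Int.lnot x := by cases x <;> rfl

private theorem inot_eq (x : ℤ) : ~~~x = -x - 1 := by
  cases x with
  | ofNat n => show Int.negSucc n = _; rw [Int.negSucc_eq]; simp [Int.ofNat_eq_natCast]; ring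
  | negSucc n => show (n : ℤ) = _; rw [Int.negSucc_eq]; ring

private theorem tb_xor (x y : ℤ) (k : ℕ) :
    (x ^^^ y).testBit k = ((x.testBit k) ^^ (y.testBit k)) := Int.testBit_lxor x y k

private theorem tb_and (x y : ℤ) (k : ℕ) :
    (x &&& y).testBit k = ((x.testBit k) && (y.testBit k)) := Int.testBit_land x y k

private theorem tb_not (x : ℤ) (k : ℕ) :
    (~~~x).testBit k = !(x.testBit k) := by rw [inot_def]; exact Int.testBit_lnot x k

private theorem tb_zero (k : ℕ) : (0 : ℤ).testBit k = false := Nat.zero_testBit k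

private theorem tb_natCast (n k : ℕ) : ((n : ℤ)).testBit k = n.testBit k := rfl

private theorem intExt {x y : ℤ} (h : ∀ k, x.testBit k = y.testBit k) : x = y := by
  cases x with
  | ofNat m =>
    cases y with
    | ofNat n => exact congrArg Int.ofNat (Nat.eq_of_testBit_eq fun i => h i)
    | negSucc n =>
      exfalso
      have hm : Nat.testBit m (max m.size n.size) = false :=
        Nat.testBit_lt_two_pow (lt_of_lt_of_le (Nat.lt_size_self m)
          (Nat.pow_le_pow_right (by norm_num) (le_max_left _ _)))
      have hn : Nat.testBit n (max m.size n.size) = false :=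
        Nat.testBit_lt_two_pow (lt_of_lt_of_le (Nat.lt_size_self n)
          (Nat.pow_le_pow_right (by norm_num) (le_max_right _ _)))
      have := h (max m.size n.size)
      simp only [Int.testBit, hm, hn] at this
      simp at this
  | negSucc m =>
    cases y with
    | ofNat n =>
      exfalso
      have hm : Nat.testBit m (max m.size n.size) = false :=
        Nat.testBit_lt_two_pow (lt_of_lt_of_le (Nat.lt_size_self m)
          (Nat.pow_le_pow_right (by norm_num) (le_max_left _ _)))
      have hn : Nat.testBit n (max m.size n.size) = false :=
        Nat.testBit_lt_two_pow (lt_of_lt_of_le (Nat.lt_size_self n)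
          (Nat.pow_le_pow_right (by norm_num) (le_max_right _ _)))
      have := h (max m.size n.size)
      simp only [Int.testBit, hm, hn] at this
      simp at this
    | negSucc n =>
      have : m = n := Nat.eq_of_testBit_eq fun i => by
        have := h i
        simp only [Int.testBit] at this
        simpa using this
      rw [this]

private theorem intHA (x y : ℤ) : x + y = (x ^^^ y) + 2 * (x &&& y) := by
  rw [ixor_def, iand_def]
  cases x with
  | ofNat m =>
    cases y with
    | ofNat n =>
      show (m : ℤ) + n = ((m ^^^ n : ℕ) : ℤ) + 2 * ((m &&& n : ℕ) : ℤ)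
      have := natHA m n; omega
    | negSucc n =>
      show (m : ℤ) + Int.negSucc n = Int.negSucc (m ^^^ n) + 2 * ((m.ldiff n : ℕ) : ℤ)
      simp only [Int.negSucc_eq]
      have h1 := natXD m n
      have h2 := natLD m n
      have h3 := natLD n m
      have h4 := Nat.land_comm m n
      push_cast
      omega
  | negSucc m =>
    cases y with
    | ofNat n =>
      show Int.negSucc m + (n : ℤ) = Int.negSucc (m ^^^ n) + 2 * ((n.ldiff m : ℕ) : ℤ)
      simp only [Int.negSucc_eq]
      have h1 := natXD m n
      have h2 := natLD m n
      have h3 := natLD n m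
      have h4 := Nat.land_comm m n
      push_cast
      omega
    | negSucc n =>
      show Int.negSucc m + Int.negSucc n = ((m ^^^ n : ℕ) : ℤ) + 2 * Int.negSucc (m ||| n)
      simp only [Int.negSucc_eq]
      have h1 := natHA m n
      have h2 := natOR m n
      push_cast
      omega

private theorem intFA (x y z : ℤ) : x + y + z =
    (x ^^^ y ^^^ z) + 2 * ((x &&& y) ^^^ (y &&& z) ^^^ (z &&& x)) := by
  have h1 := intHA x y
  have h2 := intHA (x ^^^ y) z
  have h3 : ((x ^^^ y) &&& z) &&& (x &&& y) = 0 := by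
    apply intExt
    intro k
    simp only [tb_and, tb_xor, tb_zero]
    cases x.testBit k <;> cases y.testBit k <;> cases z.testBit k <;> rfl
  have h4 : ((x ^^^ y) &&& z) + (x &&& y) = (x &&& y) ^^^ (y &&& z) ^^^ (z &&& x) := by
    have h5 := intHA ((x ^^^ y) &&& z) (x &&& y)
    rw [h3, mul_zero, add_zero] at h5
    rw [h5]
    apply intExt
    intro k
    simp only [tb_and, tb_xor]
    cases x.testBit k <;> cases y.testBit k <;> cases z.testBit k <;> rfl
  linarith

private theorem stepEq (C R T : ℤ) :
    (C ^^^ R ^^^ T) - 2 * (((~~~C) &&& R) ^^^ (R &&& T) ^^^ (T &&& (~~~C))) = C - R - T := by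
  have h := intFA (~~~C) R T
  have hx : (~~~C) ^^^ R ^^^ T = ~~~(C ^^^ R ^^^ T) := by
    apply intExt
    intro k
    simp only [tb_xor, tb_not]
    cases C.testBit k <;> cases R.testBit k <;> cases T.testBit k <;> rfl
  rw [hx] at h
  generalize ((~~~C) &&& R) ^^^ (R &&& T) ^^^ (T &&& (~~~C)) = M at h ⊢
  rw [inot_eq, inot_eq] at h
  linarith

private theorem land_natCast (m n : ℕ) : (m : ℤ) &&& (n : ℤ) = ((m &&& n : ℕ) : ℤ) := rfl

private theorem xor_natCast (m n : ℕ) : (m : ℤ) ^^^ (n : ℤ) = ((m ^^^ n : ℕ) : ℤ) := rfl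

private theorem land_natRight (x : ℤ) (n : ℕ) : ∃ m : ℕ, x &&& (n : ℤ) = (m : ℤ) := by
  cases x with
  | ofNat p => exact ⟨p &&& n, rfl⟩
  | negSucc p => exact ⟨n.ldiff p, rfl⟩

private theorem land_natLeft (n : ℕ) (x : ℤ) : ∃ m : ℕ, (n : ℤ) &&& x = (m : ℤ) := by
  cases x with
  | ofNat p => exact ⟨n &&& p, rfl⟩
  | negSucc p => exact ⟨n.ldiff p, rfl⟩

private theorem nat_tb_high (k R j : ℕ) (h : j < k) : (2 ^ k * R).testBit j = false := by
  rw [Nat.testBit_eq_decide_div_mod_eq]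
  have h1 : 2 ^ k * R / 2 ^ j = 2 ^ (k - j) * R := by
    rw [show (2:ℕ) ^ k = 2 ^ j * 2 ^ (k - j) by rw [← pow_add]; congr 1; omega, mul_assoc]
    exact Nat.mul_div_cancel_left _ (Nat.two_pow_pos j)
  rw [h1]
  have h2 : 2 ∣ 2 ^ (k - j) * R :=
    Dvd.dvd.mul_right (dvd_pow_self 2 (by omega : k - j ≠ 0)) R
  have h3 : 2 ^ (k - j) * R % 2 = 0 := Nat.mod_eq_zero_of_dvd h2
  simp [h3]

private theorem nat_dvd_of_testBit (k M : ℕ) (h : ∀ j, j < k → M.testBit j = false) :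
    2 ^ k ∣ M := by
  apply Nat.dvd_of_mod_eq_zero
  apply Nat.eq_of_testBit_eq
  intro j
  rw [Nat.testBit_mod_two_pow, Nat.zero_testBit]
  by_cases hj : j < k
  · simp [hj, h j hj]
  · simp [hj]

private theorem digit_lemma (b q R i : ℕ) (hodd : b % 2 = 1) :
    (b * (q - q % 2 ^ i) + 2 ^ (i + 1) * R).testBit i = q.testBit i := by
  have hsub : q - q % 2 ^ i = 2 ^ i * (q / 2 ^ i) := by
    have := (Nat.div_add_mod q (2 ^ i)).symm
    omega
  have hN : b * (q - q % 2 ^ i) + 2 ^ (i + 1) * R = 2 ^ i * (b * (q / 2 ^ i) + 2 * R) := by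
    rw [hsub, pow_succ]; ring
  rw [hN, Nat.testBit_eq_decide_div_mod_eq, Nat.testBit_eq_decide_div_mod_eq,
    Nat.mul_div_cancel_left _ (Nat.two_pow_pos i)]
  have : (b * (q / 2 ^ i) + 2 * R) % 2 = q / 2 ^ i % 2 := by
    rw [Nat.mul_comm 2 R, Nat.add_mul_mod_self_right, Nat.mul_mod, hodd, one_mul]
    omega
  rw [this]

private theorem tb_T_self (i b : ℕ) (hodd : b % 2 = 1) : (2 ^ i * b).testBit i = true := by
  rw [Nat.testBit_eq_decide_div_mod_eq, Nat.mul_div_cancel_left _ (Nat.two_pow_pos i)]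
  simp [hodd]

private theorem sum_bits (q n : ℕ) :
    (∑ i ∈ Finset.range n, if q.testBit i then 2 ^ i else 0) = q % 2 ^ n := by
  induction n with
  | zero => simp [Nat.mod_one]
  | succ n ih =>
    rw [Finset.sum_range_succ, ih, Nat.mod_pow_succ]
    have ht : q.testBit n = decide (q / 2 ^ n % 2 = 1) := Nat.testBit_eq_decide_div_mod_eq
    by_cases h : q.testBit n
    · rw [if_pos h]
      rw [ht] at h; simp at h
      rw [h, mul_one]
    · rw [if_neg h]
      rw [ht] at h; simp at h
      rw [show q / 2 ^ n % 2 = 0 by omega, mul_zero, add_zero]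

/-- Quotient readout for lopsided division: if `b` divides `a`, then with
`Γ = 1 + Nat.size a - Nat.size b` the quotient `a / b` is given by the diagonal bits
of the algorithm. -/
theorem lopsided_division_quotient (a b : ℕ) (ha : 0 < a) (hb0 : 0 < b)
    (hb : Odd b) (hba : b ≤ a) (c r : ℕ → ℤ)
    (hc0 : c 0 = (a : ℤ)) (hr0 : r 0 = 0)
    (hc : ∀ i, c (i + 1) =
      c i ^^^ r i ^^^ (if (c i).testBit i then 2 ^ i * (b : ℤ) else 0))
    (hr : ∀ i, r (i + 1) =
      2 * (((~~~(c i)) &&& r i)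
        ^^^ ((r i) &&& (if (c i).testBit i then 2 ^ i * (b : ℤ) else 0))
        ^^^ ((if (c i).testBit i then 2 ^ i * (b : ℤ) else 0) &&& (~~~(c i)))))
    (hdvd : b ∣ a) :
    ((a / b : ℕ) : ℤ) = ∑ i ∈ Finset.range (1 + Nat.size a - Nat.size b),
      (if (c i).testBit i then (2 : ℤ) ^ i else 0) := by
  obtain ⟨q, hq⟩ := hdvd
  have hbodd : b % 2 = 1 := Nat.odd_iff.mp hb
  have hqa : a / b = q := by rw [hq]; exact Nat.mul_div_cancel_left q hb0
  have inv : ∀ i, ∃ R : ℕ, r i = ((2 ^ (i + 1) * R : ℕ) : ℤ) ∧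
      c i = ((b * (q - q % 2 ^ i) + 2 ^ (i + 1) * R : ℕ) : ℤ) := by
    intro i
    induction i with
    | zero =>
      refine ⟨0, by simp [hr0], ?_⟩
      rw [hc0, hq]
      simp only [pow_zero, Nat.mod_one, Nat.sub_zero, pow_one, Nat.mul_zero, Nat.add_zero]
    | succ i ih =>
      obtain ⟨R, hR, hC⟩ := ih
      have hdig : (c i).testBit i = q.testBit i := by
        rw [hC, tb_natCast]; exact digit_lemma b q R i hbodd
      set T : ℕ := if q.testBit i then 2 ^ i * b else 0 with hTdef
      have hT : (if (c i).testBit i then 2 ^ i * (b : ℤ) else 0) = (T : ℤ) := by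
        rw [hdig, hTdef]
        by_cases hd : q.testBit i <;> simp [hd] <;> push_cast <;> ring
      have e1 : c (i + 1) = c i ^^^ r i ^^^ (T : ℤ) := by rw [hc i, hT]
      have e2 : r (i + 1) = 2 * (((~~~(c i)) &&& r i) ^^^ (r i &&& (T : ℤ))
          ^^^ ((T : ℤ) &&& (~~~(c i)))) := by rw [hr i, hT]
      have harith : c (i + 1) - r (i + 1) = c i - r i - (T : ℤ) := by
        rw [e1, e2]; exact stepEq _ _ _
      obtain ⟨A, hA⟩ := land_natRight (~~~(c i)) (2 ^ (i + 1) * R)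
      have hA' : (~~~(c i)) &&& r i = (A : ℤ) := by rw [hR]; exact hA
      have hB : r i &&& (T : ℤ) = (((2 ^ (i + 1) * R) &&& T : ℕ) : ℤ) := by
        rw [hR]; exact land_natCast _ _
      obtain ⟨C', hC'⟩ := land_natLeft T (~~~(c i))
      have hmaj : ((~~~(c i)) &&& r i) ^^^ (r i &&& (T : ℤ)) ^^^ ((T : ℤ) &&& (~~~(c i)))
          = ((A ^^^ (2 ^ (i + 1) * R &&& T) ^^^ C' : ℕ) : ℤ) := by
        rw [hA', hB, hC', xor_natCast, xor_natCast]
      set M : ℕ := A ^^^ (2 ^ (i + 1) * R &&& T) ^^^ C' with hMdef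
      have hMbits : ∀ j, j < i + 1 → M.testBit j = false := by
        intro j hj
        have key : (((~~~(c i)) &&& r i) ^^^ (r i &&& (T : ℤ))
            ^^^ ((T : ℤ) &&& (~~~(c i)))).testBit j = false := by
          simp only [tb_xor, tb_and, tb_not]
          have hrb : (r i).testBit j = false := by
            rw [hR, tb_natCast]; exact nat_tb_high (i + 1) R j hj
          have htb : ((T : ℤ)).testBit j = T.testBit j := tb_natCast _ _
          rcases Nat.lt_or_ge j i with hji | hji
          · have hTb : T.testBit j = false := by
              rw [hTdef]
              by_cases hd : q.testBit i
              · rw [if_pos hd]; exact nat_tb_high i b j hji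
              · rw [if_neg hd]; exact Nat.zero_testBit j
            rw [hrb, htb, hTb]; simp
          · have hji' : j = i := by omega
            have htT : T.testBit i = q.testBit i := by
              cases hd : q.testBit i <;>
                simp [hTdef, hd, tb_T_self i b hbodd, Nat.zero_testBit]
            rw [hrb, htb, hji', htT, hdig]
            cases q.testBit i <;> simp
        rw [hmaj, tb_natCast] at key
        exact key
      obtain ⟨R', hR'⟩ := nat_dvd_of_testBit (i + 1) M hMbits
      have hkey : b * (q - q % 2 ^ i) = b * (q - q % 2 ^ (i + 1)) + T := by
        have hmod : q % 2 ^ (i + 1) = q % 2 ^ i + 2 ^ i * (q / 2 ^ i % 2) :=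
          Nat.mod_pow_succ
        have hle1 : q % 2 ^ i ≤ q := Nat.mod_le q _
        have hle2 : q % 2 ^ (i + 1) ≤ q := Nat.mod_le q _
        have ht2 : q.testBit i = decide (q / 2 ^ i % 2 = 1) := Nat.testBit_eq_decide_div_mod_eq
        by_cases hd : q.testBit i
        · have h1 : q / 2 ^ i % 2 = 1 := by rw [ht2] at hd; simpa using hd
          have h2 : q - q % 2 ^ i = (q - q % 2 ^ (i + 1)) + 2 ^ i := by
            rw [h1, mul_one] at hmod; omega
          rw [h2, Nat.mul_add, hTdef, if_pos hd]
          ring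
        · have h1 : q / 2 ^ i % 2 = 0 := by
            rw [ht2] at hd; simp at hd; omega
          have h2 : q - q % 2 ^ (i + 1) = q - q % 2 ^ i := by
            rw [h1, mul_zero, add_zero] at hmod; omega
          rw [h2, hTdef, if_neg hd, add_zero]
      refine ⟨R', ?_, ?_⟩
      · rw [e2, hmaj, hR']; push_cast; ring
      · have hc1 : c (i + 1) = c i - r i - (T : ℤ) + r (i + 1) := by omega
        rw [hc1, e2, hmaj, hR', hC, hR, hkey]
        push_cast
        ring
  have hdigAll : ∀ i, (c i).testBit i = q.testBit i := fun i => by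
    obtain ⟨R, _, hC⟩ := inv i
    rw [hC, tb_natCast]; exact digit_lemma b q R i hbodd
  set Γ := 1 + Nat.size a - Nat.size b with hΓ
  have hsz : Nat.size b ≤ Nat.size a := Nat.size_le_size hba
  have hsz1 : 1 ≤ Nat.size b := Nat.size_pos.mpr hb0
  have hblow : 2 ^ (Nat.size b - 1) ≤ b := by
    by_contra h
    push_neg at h
    have := Nat.size_le.mpr h
    omega
  have hqlt : q < 2 ^ Γ := by
    have h3 : a < 2 ^ Nat.size a := Nat.lt_size_self a
    have h4 : q * 2 ^ (Nat.size b - 1) ≤ q * b := Nat.mul_le_mul le_rfl hblow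
    have h5 : q * b = a := by rw [hq]; ring
    have h6 : (2 : ℕ) ^ Nat.size a = 2 ^ Γ * 2 ^ (Nat.size b - 1) := by
      rw [← pow_add]; congr 1; omega
    have h7 : q * 2 ^ (Nat.size b - 1) < 2 ^ Γ * 2 ^ (Nat.size b - 1) := by omega
    exact Nat.lt_of_mul_lt_mul_right h7
  rw [hqa]
  have hco : ∀ i ∈ Finset.range Γ,
      (if (c i).testBit i then (2 : ℤ) ^ i else 0)
        = (((if q.testBit i then 2 ^ i else 0 : ℕ)) : ℤ) := by
    intro i _
    rw [hdigAll i]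
    split <;> simp
  rw [Finset.sum_congr rfl hco, ← Nat.cast_sum, sum_bits q Γ, Nat.mod_eq_of_lt hqlt]
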